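/- Under the second-order self-bounding assumption and the third-order self-bounding assumption, fix w0 ∈ E, set L1(w0) = max{1, ρ0(F(w0)+1), ρ0(F(w0))·ρ0(F(w0)+1), ρ1(F(w0)+1)} and L2(w0) = max{1, L1(w0), ρ2(F(w0)+1)}. Then for every w̃ ∈ E with F(w̃) ≤ F(w0) and all u1, u2 ∈ E with ‖u1 − w̃‖ ≤ 1/ρ0(F(w0)+1) and ‖u2 − w̃‖ ≤ 1/ρ0(F(w0)+1), one has ‖∇²F(u1) − ∇²F(u2)‖_op ≤ L2(w0)·‖u1 − u2‖. -/

import Mathlib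

/-- `θ(x) = ∫₀ˣ 1/ρ1(v) dv`. -/
noncomputable def sbTheta (ρ1 : ℝ → ℝ) (x : ℝ) : ℝ := ∫ v in (0 : ℝ)..x, 1 / ρ1 v

/-- `ρ0(x) = ρ1(x)·√(2 θ(x))`. -/
noncomputable def sbRho0 (ρ1 : ℝ → ℝ) (x : ℝ) : ℝ := ρ1 x * Real.sqrt (2 * sbTheta ρ1 x)

open Set Filter Topology intervalIntegral

lemma sb_integrable {ρ1 : ℝ → ℝ} (hρ1cont : ContinuousOn ρ1 (Set.Ici 0))
    (hρ1pos : ∀ x ∈ Set.Ici (0 : ℝ), 0 < ρ1 x) {a b : ℝ} (ha : 0 ≤ a) (hab : a ≤ b) :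
    IntervalIntegrable (fun v => 1 / ρ1 v) MeasureTheory.volume a b := by
  apply ContinuousOn.intervalIntegrable
  rw [Set.uIcc_of_le hab]
  apply ContinuousOn.div continuousOn_const
    (hρ1cont.mono (fun x hx => le_trans ha hx.1))
  intro x hx
  exact ne_of_gt (hρ1pos x (le_trans ha hx.1))

lemma sbTheta_lower {ρ1 : ℝ → ℝ} (hρ1mono : MonotoneOn ρ1 (Set.Ici 0))
    (hρ1cont : ContinuousOn ρ1 (Set.Ici 0))
    (hρ1pos : ∀ x ∈ Set.Ici (0 : ℝ), 0 < ρ1 x) {x : ℝ} (hx : 0 ≤ x) :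
    x / ρ1 x ≤ sbTheta ρ1 x := by
  have h1 : (∫ _ in (0:ℝ)..x, 1 / ρ1 x) ≤ ∫ v in (0:ℝ)..x, 1 / ρ1 v := by
    apply intervalIntegral.integral_mono_on hx
      (intervalIntegrable_const) (sb_integrable hρ1cont hρ1pos le_rfl hx)
    intro v hv
    apply one_div_le_one_div_of_le (hρ1pos v hv.1)
    exact hρ1mono hv.1 hx hv.2
  rw [intervalIntegral.integral_const, smul_eq_mul, sub_zero] at h1
  calc x / ρ1 x = x * (1 / ρ1 x) := by ring
  _ ≤ sbTheta ρ1 x := h1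

lemma sbTheta_nonneg {ρ1 : ℝ → ℝ} (hρ1mono : MonotoneOn ρ1 (Set.Ici 0))
    (hρ1cont : ContinuousOn ρ1 (Set.Ici 0))
    (hρ1pos : ∀ x ∈ Set.Ici (0 : ℝ), 0 < ρ1 x) {x : ℝ} (hx : 0 ≤ x) :
    0 ≤ sbTheta ρ1 x := by
  refine le_trans ?_ (sbTheta_lower hρ1mono hρ1cont hρ1pos hx)
  have := hρ1pos x hx
  positivity

lemma sbTheta_mono {ρ1 : ℝ → ℝ} (hρ1cont : ContinuousOn ρ1 (Set.Ici 0))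
    (hρ1pos : ∀ x ∈ Set.Ici (0 : ℝ), 0 < ρ1 x) :
    MonotoneOn (sbTheta ρ1) (Set.Ici 0) := by
  intro x hx y hy hxy
  have hadd : sbTheta ρ1 x + (∫ v in x..y, 1 / ρ1 v) = sbTheta ρ1 y :=
    intervalIntegral.integral_add_adjacent_intervals
      (sb_integrable hρ1cont hρ1pos le_rfl hx)
      (sb_integrable hρ1cont hρ1pos hx hxy)
  have hnn : 0 ≤ ∫ v in x..y, 1 / ρ1 v := by
    apply intervalIntegral.integral_nonneg hxy
    intro u hu
    have := hρ1pos u (le_trans hx hu.1)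
    positivity
  linarith

lemma sbRho0_nonneg {ρ1 : ℝ → ℝ} (hρ1pos : ∀ x ∈ Set.Ici (0 : ℝ), 0 < ρ1 x)
    {x : ℝ} (hx : 0 ≤ x) : 0 ≤ sbRho0 ρ1 x := by
  unfold sbRho0
  have := hρ1pos x hx
  positivity

lemma sbRho0_mono {ρ1 : ℝ → ℝ} (hρ1mono : MonotoneOn ρ1 (Set.Ici 0))
    (hρ1cont : ContinuousOn ρ1 (Set.Ici 0))
    (hρ1pos : ∀ x ∈ Set.Ici (0 : ℝ), 0 < ρ1 x) :
    MonotoneOn (sbRho0 ρ1) (Set.Ici 0) := by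
  intro x hx y hy hxy
  unfold sbRho0
  apply mul_le_mul (hρ1mono hx hy hxy)
  · apply Real.sqrt_le_sqrt
    have := sbTheta_mono hρ1cont hρ1pos hx hy hxy
    linarith
  · positivity
  · exact (hρ1pos y hy).le

lemma sbRho0_pos {ρ1 : ℝ → ℝ} (hρ1mono : MonotoneOn ρ1 (Set.Ici 0))
    (hρ1cont : ContinuousOn ρ1 (Set.Ici 0))
    (hρ1pos : ∀ x ∈ Set.Ici (0 : ℝ), 0 < ρ1 x) {x : ℝ} (hx : 0 < x) :
    0 < sbRho0 ρ1 x := by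
  unfold sbRho0
  have h1 := hρ1pos x hx.le
  have h2 : 0 < sbTheta ρ1 x :=
    lt_of_lt_of_le (by positivity) (sbTheta_lower hρ1mono hρ1cont hρ1pos hx.le)
  positivity

/-- `√(2 ρ1 x · x) ≤ ρ0 x`. -/
lemma sb_sqrt_le_rho0 {ρ1 : ℝ → ℝ} (hρ1mono : MonotoneOn ρ1 (Set.Ici 0))
    (hρ1cont : ContinuousOn ρ1 (Set.Ici 0))
    (hρ1pos : ∀ x ∈ Set.Ici (0 : ℝ), 0 < ρ1 x) {x : ℝ} (hx : 0 ≤ x) :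
    Real.sqrt (2 * ρ1 x * x) ≤ sbRho0 ρ1 x := by
  have h1 := hρ1pos x hx
  have hθ := sbTheta_lower hρ1mono hρ1cont hρ1pos hx
  unfold sbRho0
  rw [show ρ1 x * Real.sqrt (2 * sbTheta ρ1 x)
      = Real.sqrt ((ρ1 x)^2 * (2 * sbTheta ρ1 x)) by
    rw [Real.sqrt_mul (sq_nonneg _), Real.sqrt_sq h1.le,
      Real.sqrt_mul (by norm_num : (0:ℝ) ≤ 2)]]
  apply Real.sqrt_le_sqrt
  have : x ≤ ρ1 x * sbTheta ρ1 x := by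
    rw [div_le_iff₀ h1] at hθ
    linarith [hθ]
  nlinarith [this, h1]


lemma sb_mono_aux {f f' : ℝ → ℝ} {a b : ℝ} (hab : a ≤ b)
    (hd : ∀ u ∈ Set.Icc a b, HasDerivAt f (f' u) u)
    (hpos : ∀ u ∈ Set.Icc a b, 0 ≤ f' u) :
    ∀ s ∈ Set.Icc a b, f a ≤ f s := by
  intro s hs
  have hmono : MonotoneOn f (Set.Icc a b) := by
    apply monotoneOn_of_deriv_nonneg (convex_Icc a b)
    · intro x hx; exact (hd x hx).continuousAt.continuousWithinAt
    · intro x hx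
      rw [interior_Icc] at hx
      exact (hd x (Set.Ioo_subset_Icc_self hx)).differentiableAt.differentiableWithinAt
    · intro x hx
      rw [interior_Icc] at hx
      rw [(hd x (Set.Ioo_subset_Icc_self hx)).deriv]
      exact hpos x (Set.Ioo_subset_Icc_self hx)
  exact hmono (Set.left_mem_Icc.2 hab) hs hs.1

lemma sb_bootstrap {φ : ℝ → ℝ} (hφ : Continuous φ) {T M : ℝ} (hT : 0 ≤ T)
    (h0 : φ 0 ≤ M)
    (H : ∀ t ∈ Set.Ico 0 T, (∀ s ∈ Set.Icc 0 t, φ s ≤ M) → φ t < M) :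
    ∀ t ∈ Set.Icc 0 T, φ t ≤ M := by
  set S : Set ℝ := {t | t ∈ Set.Icc 0 T ∧ ∀ s ∈ Set.Icc 0 t, φ s ≤ M} with hS
  have h0S : (0 : ℝ) ∈ S := by
    refine ⟨⟨le_refl 0, hT⟩, ?_⟩
    intro s hs
    have : s = 0 := le_antisymm hs.2 hs.1
    simpa [this] using h0
  have hbdd : BddAbove S := ⟨T, fun x hx => hx.1.2⟩
  have hne : S.Nonempty := ⟨0, h0S⟩
  set t' := sSup S with ht'
  have ht'0 : 0 ≤ t' := le_csSup hbdd h0S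
  have ht'T : t' ≤ T := csSup_le hne (fun x hx => hx.1.2)
  -- every s in [0, t') satisfies φ s ≤ M
  have hlt : ∀ s, 0 ≤ s → s < t' → φ s ≤ M := by
    intro s hs0 hst
    obtain ⟨x, hxS, hsx⟩ := exists_lt_of_lt_csSup hne hst
    exact hxS.2 s ⟨hs0, hsx.le⟩
  -- φ t' ≤ M
  have ht'M : φ t' ≤ M := by
    rcases eq_or_lt_of_le ht'0 with h | h
    · simpa [← h] using h0
    · have hne' : (𝓝[<] t').NeBot := nhdsLT_neBot t'
      haveI : (𝓝[<] t').NeBot := nhdsLT_neBot t'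
      refine le_of_tendsto (hφ.continuousAt.tendsto.mono_left
        (nhdsWithin_le_nhds (s := Set.Iio t'))) ?_
      filter_upwards [Ioo_mem_nhdsLT_of_mem (⟨h, le_refl t'⟩ : t' ∈ Set.Ioc 0 t')] with s hs
      exact hlt s hs.1.le hs.2
  have ht'S : t' ∈ S := by
    refine ⟨⟨ht'0, ht'T⟩, ?_⟩
    intro s hs
    rcases eq_or_lt_of_le hs.2 with h | h
    · simpa [h] using ht'M
    · exact hlt s hs.1 h
  -- t' = T
  have ht'eq : t' = T := by
    by_contra hne2
    have ht'ltT : t' < T := lt_of_le_of_ne ht'T hne2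
    have hstrict : φ t' < M := H t' ⟨ht'0, ht'ltT⟩ ht'S.2
    -- find η > 0 with φ < M on ball
    have hev : ∀ᶠ s in 𝓝 t', φ s < M := by
      have := hφ.continuousAt (x := t')
      exact this.eventually_lt continuousAt_const hstrict
    obtain ⟨η, hη, hball⟩ := Metric.eventually_nhds_iff.1 hev
    set t2 := min (t' + η / 2) T with ht2
    have ht2gt : t' < t2 := lt_min (by linarith) ht'ltT
    have ht2S : t2 ∈ S := by
      refine ⟨⟨le_trans ht'0 ht2gt.le, min_le_right _ _⟩, ?_⟩
      intro s hs
      rcases le_or_gt s t' with h | h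
      · exact ht'S.2 s ⟨hs.1, h⟩
      · refine (hball ?_).le
        rw [Real.dist_eq, abs_lt]
        have : s ≤ t' + η / 2 := le_trans hs.2 (min_le_left _ _)
        constructor <;> linarith
    have := le_csSup hbdd ht2S
    rw [← ht'] at this
    linarith
  intro t ht
  rcases eq_or_lt_of_le ht.2 with h | h
  · rw [h, ← ht'eq]; exact ht'M
  · exact hlt t ht.1 (ht'eq ▸ h)

variable {d : ℕ} {F : EuclideanSpace ℝ (Fin d) → ℝ}

lemma sb_line (w v : EuclideanSpace ℝ (Fin d)) (t : ℝ) :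
    HasDerivAt (fun s : ℝ => w + s • v) v t := by
  simpa using ((hasDerivAt_id t).smul_const v).const_add w

lemma sb_line_deriv1 (hF : ContDiff ℝ 2 F) (w v : EuclideanSpace ℝ (Fin d)) (t : ℝ) :
    HasDerivAt (fun s : ℝ => F (w + s • v)) (fderiv ℝ F (w + t • v) v) t :=
  ((hF.differentiable (by norm_num) (w + t • v)).hasFDerivAt).comp_hasDerivAt t
    (sb_line w v t)

lemma sb_line_deriv2 (hF : ContDiff ℝ 2 F) (w v : EuclideanSpace ℝ (Fin d)) (t : ℝ) :
    HasDerivAt (fun s : ℝ => fderiv ℝ F (w + s • v) v)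
      ((fderiv ℝ (fderiv ℝ F) (w + t • v) v) v) t := by
  have hF' : ContDiff ℝ 1 (fderiv ℝ F) := hF.fderiv_right (by norm_num)
  have hd : HasDerivAt (fun s : ℝ => fderiv ℝ F (w + s • v))
      (fderiv ℝ (fderiv ℝ F) (w + t • v) v) t :=
    ((hF'.differentiable (by norm_num) (w + t • v)).hasFDerivAt).comp_hasDerivAt t (sb_line w v t)
  simpa using hd.clm_apply (hasDerivAt_const t v)

set_option maxHeartbeats 1000000 in
lemma sb_grad_sq_bound {d : ℕ} {F : EuclideanSpace ℝ (Fin d) → ℝ}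
    (hF : ContDiff ℝ 2 F) (hFnn : ∀ w, 0 ≤ F w)
    {ρ1 : ℝ → ℝ} (hρ1mono : MonotoneOn ρ1 (Set.Ici 0))
    (hρ1cont : ContinuousOn ρ1 (Set.Ici 0))
    (hρ1pos : ∀ x ∈ Set.Ici (0 : ℝ), 0 < ρ1 x)
    (hρ1bound : ∀ w, ‖fderiv ℝ (fderiv ℝ F) w‖ ≤ ρ1 (F w))
    (w : EuclideanSpace ℝ (Fin d)) :
    ‖fderiv ℝ F w‖ ^ 2 ≤ 2 * ρ1 (F w) * F w := by
  set G := fderiv ℝ F w with hG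
  set g := ‖G‖ with hgdef
  rcases eq_or_lt_of_le (norm_nonneg G) with hg0 | hgpos
  · have h1 := hρ1pos (F w) (hFnn w)
    have h2 := hFnn w
    rw [hgdef, ← hg0]
    norm_num
    positivity
  -- construct the unit descent direction
  set z := (InnerProductSpace.toDual ℝ (EuclideanSpace ℝ (Fin d))).symm G with hz
  have hzval : ∀ y, G y = inner ℝ z y := by
    intro y
    rw [hz, InnerProductSpace.toDual_symm_apply]
  have hznorm : ‖z‖ = g := by
    rw [hz, hgdef, LinearIsometryEquiv.norm_map]
  set v := (-g⁻¹) • z with hv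
  have hGv : G v = -g := by
    rw [hv, hzval, real_inner_smul_right, real_inner_self_eq_norm_sq, hznorm]
    field_simp
  have hvnorm : ‖v‖ = 1 := by
    rw [hv, norm_smul, hznorm, norm_neg, norm_inv, Real.norm_eq_abs,
      abs_of_pos hgpos]
    field_simp
    exact hgdef
  set φ : ℝ → ℝ := fun t => F (w + t • v) with hφ
  have hφcont : Continuous φ := (hF.continuous).comp (by continuity)
  have hφ0 : φ 0 = F w := by simp [hφ]
  have hφnn : ∀ t, 0 ≤ φ t := fun t => hFnn _
  -- the δ-approximate bound
  have key : ∀ δ : ℝ, 0 < δ → g ^ 2 ≤ 2 * ρ1 (F w + δ) * F w := by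
    intro δ hδ
    set M := F w + δ with hM
    have hMnn : 0 ≤ M := by have := hFnn w; linarith
    set B := ρ1 M with hB
    have hBpos : 0 < B := hρ1pos M hMnn
    set T := g / B with hT
    have hTpos : 0 < T := div_pos hgpos hBpos
    -- derivative bound whenever φ ≤ M on [0,t]
    have hstep : ∀ t : ℝ, 0 ≤ t → (∀ s ∈ Set.Icc 0 t, φ s ≤ M) →
        ∀ s ∈ Set.Icc 0 t, fderiv ℝ F (w + s • v) v ≤ B * s - g := by
      intro t ht hbound s hs
      have hsecond : ∀ u ∈ Set.Icc 0 t,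
          (fderiv ℝ (fderiv ℝ F) (w + u • v) v) v ≤ B := by
        intro u hu
        have h1 : |(fderiv ℝ (fderiv ℝ F) (w + u • v) v) v|
            ≤ ‖fderiv ℝ (fderiv ℝ F) (w + u • v)‖ := by
          rw [← Real.norm_eq_abs]
          calc ‖(fderiv ℝ (fderiv ℝ F) (w + u • v) v) v‖
              ≤ ‖fderiv ℝ (fderiv ℝ F) (w + u • v) v‖ * ‖v‖ :=
                ContinuousLinearMap.le_opNorm _ v
            _ ≤ ‖fderiv ℝ (fderiv ℝ F) (w + u • v)‖ * ‖v‖ * ‖v‖ := by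
                apply mul_le_mul_of_nonneg_right _ (norm_nonneg v)
                exact ContinuousLinearMap.le_opNorm _ v
            _ = ‖fderiv ℝ (fderiv ℝ F) (w + u • v)‖ := by
                rw [hvnorm]; ring
        have h2 : ρ1 (F (w + u • v)) ≤ B := by
          apply hρ1mono (hFnn _) hMnn
          exact hbound u hu
        calc (fderiv ℝ (fderiv ℝ F) (w + u • v) v) v ≤ _ := le_abs_self _
          _ ≤ ‖fderiv ℝ (fderiv ℝ F) (w + u • v)‖ := h1
          _ ≤ ρ1 (F (w + u • v)) := hρ1bound _
          _ ≤ B := h2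
      -- monotone comparison for B*s - φ'(s)
      have hmono := sb_mono_aux (f := fun s => B * s - fderiv ℝ F (w + s • v) v)
        (f' := fun s => B - (fderiv ℝ (fderiv ℝ F) (w + s • v) v) v) ht
        (fun u _ => by
          exact (((hasDerivAt_id u).const_mul B).sub (sb_line_deriv2 hF w v u)).congr_deriv (by simp))
        (fun u hu => by
          show (0:ℝ) ≤ B - (fderiv ℝ (fderiv ℝ F) (w + u • v) v) v
          linarith [hsecond u hu]) s hs
      have hmono' : B * 0 - fderiv ℝ F (w + (0:ℝ) • v) v
          ≤ B * s - fderiv ℝ F (w + s • v) v := hmono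
      have h0 : fderiv ℝ F (w + (0:ℝ) • v) v = -g := by
        rw [zero_smul, add_zero]
        exact hGv
      rw [h0] at hmono'
      linarith [hmono']
    -- bootstrap: φ ≤ M on [0,T]
    have hboot : ∀ t ∈ Set.Icc 0 T, φ t ≤ M := by
      apply sb_bootstrap hφcont hTpos.le (by rw [hφ0]; linarith)
      intro t ht hbound
      -- φ is nonincreasing on [0,t], so φ t ≤ F w < M
      have hd : ∀ s ∈ Set.Icc 0 t, fderiv ℝ F (w + s • v) v ≤ B * s - g :=
        hstep t ht.1 hbound
      have hmono := sb_mono_aux (f := fun s => -φ s)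
        (f' := fun s => -(fderiv ℝ F (w + s • v) v)) ht.1
        (fun u _ => (sb_line_deriv1 hF w v u).neg)
        (fun u hu => by
          show (0:ℝ) ≤ -(fderiv ℝ F (w + u • v) v)
          have h1 := hd u hu
          have h2 : B * u ≤ B * t := by
            apply mul_le_mul_of_nonneg_left hu.2 hBpos.le
          have h3 : B * t < B * T := by
            apply mul_lt_mul_of_pos_left ht.2 hBpos
          have h4 : B * T = g := by rw [hT]; field_simp
          linarith) t (Set.right_mem_Icc.2 ht.1)
      have hmono' : -φ 0 ≤ -φ t := hmono
      rw [hφ0] at hmono'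
      linarith
    -- quantitative conclusion on [0,T]
    have hd : ∀ s ∈ Set.Icc 0 T, fderiv ℝ F (w + s • v) v ≤ B * s - g :=
      hstep T hTpos.le hboot
    have hmono := sb_mono_aux
      (f := fun s => F w - g * s + B * s ^ 2 / 2 - φ s)
      (f' := fun s => -g + B * s - fderiv ℝ F (w + s • v) v) hTpos.le
      (fun u _ => by
        have : HasDerivAt (fun s : ℝ => F w - g * s + B * s ^ 2 / 2)
            (-g + B * u) u := by
          have h1 : HasDerivAt (fun s : ℝ => F w - g * s) (-g) u := by
            simpa using ((hasDerivAt_id u).const_mul g).const_sub (F w)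
          have h2 : HasDerivAt (fun s : ℝ => B * s ^ 2 / 2) (B * u) u := by
            have := ((hasDerivAt_pow 2 u).const_mul B).div_const 2
            simpa using this.congr_deriv (by ring)
          exact h1.add h2
        exact this.sub (sb_line_deriv1 hF w v u))
      (fun u hu => by
        show (0:ℝ) ≤ -g + B * u - fderiv ℝ F (w + u • v) v
        linarith [hd u hu]) T (Set.right_mem_Icc.2 hTpos.le)
    have hφT : 0 ≤ φ T := hφnn T
    have hmono' : F w - g * 0 + B * 0 ^ 2 / 2 - φ 0
        ≤ F w - g * T + B * T ^ 2 / 2 - φ T := hmono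
    rw [hφ0] at hmono'
    -- from F w - g*T + B*T^2/2 - φ T ≥ 0 and T = g/B
    have hTval : B * T = g := by rw [hT]; field_simp
    nlinarith [hmono', hφT, hTval, hBpos]
  -- take δ → 0⁺
  have htend : Tendsto (fun δ : ℝ => 2 * ρ1 (F w + δ) * F w) (𝓝[>] 0)
      (𝓝 (2 * ρ1 (F w) * F w)) := by
    have h1 : ContinuousWithinAt ρ1 (Set.Ici 0) (F w) :=
      hρ1cont.continuousWithinAt (hFnn w)
    have h2 : Tendsto (fun δ : ℝ => F w + δ) (𝓝[>] 0) (𝓝[Set.Ici 0] (F w)) := by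
      apply tendsto_nhdsWithin_of_tendsto_nhds_of_eventually_within
      · have : Tendsto (fun δ : ℝ => F w + δ) (𝓝 0) (𝓝 (F w + 0)) :=
          tendsto_const_nhds.add tendsto_id
        rw [add_zero] at this
        exact this.mono_left nhdsWithin_le_nhds
      · filter_upwards [self_mem_nhdsWithin] with δ (hδ : 0 < δ)
        have := hFnn w
        exact Set.mem_Ici.2 (by linarith)
    exact ((tendsto_const_nhds.mul (h1.tendsto.comp h2)).mul tendsto_const_nhds)
  refine ge_of_tendsto htend ?_
  filter_upwards [self_mem_nhdsWithin] with δ (hδ : 0 < δ)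
  exact key δ hδ

lemma sb_grad_norm_le {d : ℕ} {F : EuclideanSpace ℝ (Fin d) → ℝ}
    (hF : ContDiff ℝ 2 F) (hFnn : ∀ w, 0 ≤ F w)
    {ρ1 : ℝ → ℝ} (hρ1mono : MonotoneOn ρ1 (Set.Ici 0))
    (hρ1cont : ContinuousOn ρ1 (Set.Ici 0))
    (hρ1pos : ∀ x ∈ Set.Ici (0 : ℝ), 0 < ρ1 x)
    (hρ1bound : ∀ w, ‖fderiv ℝ (fderiv ℝ F) w‖ ≤ ρ1 (F w))
    {Y : ℝ} (hY : 0 ≤ Y) (u : EuclideanSpace ℝ (Fin d)) (hu : F u ≤ Y) :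
    ‖fderiv ℝ F u‖ ≤ sbRho0 ρ1 Y := by
  have h1 : ‖fderiv ℝ F u‖ ^ 2 ≤ 2 * ρ1 Y * Y := by
    refine le_trans (sb_grad_sq_bound hF hFnn hρ1mono hρ1cont hρ1pos hρ1bound u) ?_
    have h2 : ρ1 (F u) ≤ ρ1 Y := hρ1mono (hFnn u) hY hu
    have h3 := hρ1pos (F u) (hFnn u)
    have h4 := hFnn u
    nlinarith
  calc ‖fderiv ℝ F u‖ = Real.sqrt (‖fderiv ℝ F u‖ ^ 2) :=
        (Real.sqrt_sq (norm_nonneg _)).symm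
    _ ≤ Real.sqrt (2 * ρ1 Y * Y) := Real.sqrt_le_sqrt h1
    _ ≤ sbRho0 ρ1 Y := sb_sqrt_le_rho0 hρ1mono hρ1cont hρ1pos hY

lemma sb_sublevel {d : ℕ} {F : EuclideanSpace ℝ (Fin d) → ℝ}
    (hF : ContDiff ℝ 2 F) (hFnn : ∀ w, 0 ≤ F w)
    {ρ1 : ℝ → ℝ} (hρ1mono : MonotoneOn ρ1 (Set.Ici 0))
    (hρ1cont : ContinuousOn ρ1 (Set.Ici 0))
    (hρ1pos : ∀ x ∈ Set.Ici (0 : ℝ), 0 < ρ1 x)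
    (hρ1bound : ∀ w, ‖fderiv ℝ (fderiv ℝ F) w‖ ≤ ρ1 (F w))
    {Y : ℝ} (hY : 0 ≤ Y) {wt u : EuclideanSpace ℝ (Fin d)} (hwt : F wt ≤ Y)
    (hu : ‖u - wt‖ ≤ 1 / sbRho0 ρ1 (Y + 1)) :
    F u ≤ Y + 1 := by
  have hY1 : (0:ℝ) < Y + 1 := by linarith
  have hR0 : 0 < sbRho0 ρ1 (Y + 1) := sbRho0_pos hρ1mono hρ1cont hρ1pos hY1
  set v := u - wt with hvdef
  set φ : ℝ → ℝ := fun t => F (wt + t • v) with hφ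
  have hφcont : Continuous φ := (hF.continuous).comp (by continuity)
  have hφ0 : φ 0 = F wt := by simp [hφ]
  have hboot : ∀ t ∈ Set.Icc (0:ℝ) 1, φ t ≤ Y + 1 := by
    apply sb_bootstrap hφcont zero_le_one (by rw [hφ0]; linarith)
    intro t ht hbound
    -- g' ≤ 1 on [0,t]
    have hd : ∀ s ∈ Set.Icc 0 t, (1:ℝ) - fderiv ℝ F (wt + s • v) v ≥ 0 := by
      intro s hs
      have h1 : ‖fderiv ℝ F (wt + s • v)‖ ≤ sbRho0 ρ1 (Y + 1) := by
        apply sb_grad_norm_le hF hFnn hρ1mono hρ1cont hρ1pos hρ1bound hY1.le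
        exact hbound s hs
      have h2 : fderiv ℝ F (wt + s • v) v ≤ ‖fderiv ℝ F (wt + s • v)‖ * ‖v‖ := by
        refine le_trans (le_abs_self _) ?_
        rw [← Real.norm_eq_abs]
        exact ContinuousLinearMap.le_opNorm _ v
      have h3 : ‖fderiv ℝ F (wt + s • v)‖ * ‖v‖ ≤ sbRho0 ρ1 (Y + 1) * (1 / sbRho0 ρ1 (Y + 1)) :=
        mul_le_mul h1 hu (norm_nonneg v) hR0.le
      have h4 : sbRho0 ρ1 (Y + 1) * (1 / sbRho0 ρ1 (Y + 1)) = 1 := by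
        field_simp
      linarith
    have hmono := sb_mono_aux (f := fun s => s - φ s)
      (f' := fun s => 1 - fderiv ℝ F (wt + s • v) v) ht.1
      (fun s _ => (hasDerivAt_id s).sub (sb_line_deriv1 hF wt v s))
      (fun s hs => hd s hs) t (Set.right_mem_Icc.2 ht.1)
    have hmono' : (0:ℝ) - φ 0 ≤ t - φ t := hmono
    rw [hφ0] at hmono'
    have := ht.2
    linarith
  have h1 := hboot 1 (Set.right_mem_Icc.2 zero_le_one)
  have : φ 1 = F u := by
    rw [hφ]
    simp [hvdef]
  linarith [this ▸ h1]

/-- Under the second- and third-order self-bounding assumptions, the Hessian of `F` is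
`L2(w0)`-Lipschitz on the ball of radius `1/ρ0(F(w0)+1)` around any point of the
`F(w0)`-sublevel set. -/
theorem local_hessian_lipschitz_of_selfbounding (d : ℕ) (hd : 1 ≤ d)
    (F : EuclideanSpace ℝ (Fin d) → ℝ)
    (hF : ContDiff ℝ 2 F) (hFnn : ∀ w, 0 ≤ F w)
    (ρ1 : ℝ → ℝ) (hρ1mono : MonotoneOn ρ1 (Set.Ici 0))
    (hρ1cont : ContinuousOn ρ1 (Set.Ici 0))
    (hρ1pos : ∀ x ∈ Set.Ici (0 : ℝ), 0 < ρ1 x)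
    (hρ1bound : ∀ w, ‖fderiv ℝ (fderiv ℝ F) w‖ ≤ ρ1 (F w))
    (δ0 : ℝ) (hδ0 : 0 < δ0)
    (ρ2 : ℝ → ℝ) (hρ2mono : MonotoneOn ρ2 (Set.Ici 0))
    (hρ2nn : ∀ x ∈ Set.Ici (0 : ℝ), 0 ≤ ρ2 x)
    (hρ2lip : ∀ w w' : EuclideanSpace ℝ (Fin d), ‖w - w'‖ ≤ δ0 →
      ‖fderiv ℝ (fderiv ℝ F) w - fderiv ℝ (fderiv ℝ F) w'‖ ≤ ρ2 (F w) * ‖w - w'‖)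
    (w0 : EuclideanSpace ℝ (Fin d)) (L1w0 L2w0 : ℝ)
    (hL1w0 : L1w0 = max (max 1 (sbRho0 ρ1 (F w0 + 1)))
      (max (sbRho0 ρ1 (F w0) * sbRho0 ρ1 (F w0 + 1)) (ρ1 (F w0 + 1))))
    (hL2w0 : L2w0 = max (max 1 L1w0) (ρ2 (F w0 + 1))) :
    ∀ wt : EuclideanSpace ℝ (Fin d), F wt ≤ F w0 →
      ∀ u1 u2 : EuclideanSpace ℝ (Fin d),
        ‖u1 - wt‖ ≤ 1 / sbRho0 ρ1 (F w0 + 1) →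
        ‖u2 - wt‖ ≤ 1 / sbRho0 ρ1 (F w0 + 1) →
        ‖fderiv ℝ (fderiv ℝ F) u1 - fderiv ℝ (fderiv ℝ F) u2‖ ≤ L2w0 * ‖u1 - u2‖ := by
  intro wt hwt u1 u2 hu1 hu2
  set Y := F w0 with hYdef
  have hY : 0 ≤ Y := hFnn w0
  set K := ρ2 (Y + 1) with hK
  have hKnn : 0 ≤ K := hρ2nn (Y + 1) (by simp; linarith)
  have hKle : K ≤ L2w0 := by rw [hL2w0]; exact le_max_right _ _
  set R := 1 / sbRho0 ρ1 (Y + 1) with hR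
  -- every point of the segment [u1, u2] has F-value at most Y + 1
  have hseg : ∀ t : ℝ, 0 ≤ t → t ≤ 1 → F (u1 + t • (u2 - u1)) ≤ Y + 1 := by
    intro t ht0 ht1
    apply sb_sublevel hF hFnn hρ1mono hρ1cont hρ1pos hρ1bound hY hwt
    have heq : u1 + t • (u2 - u1) - wt = (1 - t) • (u1 - wt) + t • (u2 - wt) := by
      module
    rw [heq]
    calc ‖(1 - t) • (u1 - wt) + t • (u2 - wt)‖
        ≤ ‖(1 - t) • (u1 - wt)‖ + ‖t • (u2 - wt)‖ := norm_add_le _ _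
      _ = (1 - t) * ‖u1 - wt‖ + t * ‖u2 - wt‖ := by
          rw [norm_smul, norm_smul, Real.norm_eq_abs, Real.norm_eq_abs,
            abs_of_nonneg (by linarith), abs_of_nonneg ht0]
      _ ≤ (1 - t) * R + t * R := by
          apply add_le_add
          · exact mul_le_mul_of_nonneg_left hu1 (by linarith)
          · exact mul_le_mul_of_nonneg_left hu2 ht0
      _ = R := by ring
      _ = 1 / sbRho0 ρ1 (Y + 1) := rfl
  set D := ‖u1 - u2‖ with hD
  rcases eq_or_lt_of_le (norm_nonneg (u1 - u2)) with hD0 | hDpos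
  · have heq : u1 = u2 := by
      rw [← sub_eq_zero]
      exact norm_eq_zero.1 hD0.symm
    have hDz : D = 0 := hD.trans hD0.symm
    rw [heq, hDz, sub_self, ContinuousLinearMap.opNorm_zero, mul_zero]
  -- choose the number of chain steps
  set n := ⌈D / δ0⌉₊ with hn
  have hnpos : 0 < n := Nat.ceil_pos.2 (div_pos hDpos hδ0)
  have hnne : (n : ℝ) ≠ 0 := Nat.cast_ne_zero.2 hnpos.ne'
  have hnposR : (0:ℝ) < n := Nat.cast_pos.2 hnpos
  have hDn : D / n ≤ δ0 := by
    have h1 : D / δ0 ≤ n := Nat.le_ceil _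
    rw [div_le_iff₀ hnposR]
    rw [div_le_iff₀ hδ0] at h1
    linarith [h1]
  set p : ℕ → EuclideanSpace ℝ (Fin d) := fun i => u1 + ((i : ℝ) / n) • (u2 - u1)
    with hp
  have hp0 : p 0 = u1 := by simp [hp]
  have hpn : p n = u2 := by
    simp only [hp, div_self hnne, one_smul]
    abel
  have hpdiff : ∀ i : ℕ, p i - p (i + 1) = (-(1 / (n:ℝ))) • (u2 - u1) := by
    intro i
    simp only [hp]
    rw [add_sub_add_left_eq_sub, ← sub_smul]
    congr 1
    push_cast
    field_simp
    ring
  have hpstep : ∀ i : ℕ, ‖p i - p (i + 1)‖ = D / n := by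
    intro i
    rw [hpdiff i, norm_smul, norm_sub_rev, ← hD, Real.norm_eq_abs, abs_neg,
      abs_of_pos (by positivity : (0:ℝ) < 1/(n:ℝ))]
    ring
  have hFp : ∀ i : ℕ, i ≤ n → F (p i) ≤ Y + 1 := by
    intro i hi
    apply hseg
    · positivity
    · rw [div_le_one hnposR]
      exact_mod_cast hi
  have hDnn : 0 ≤ D := norm_nonneg _
  have hlip : ∀ i : ℕ, i < n →
      dist (fderiv ℝ (fderiv ℝ F) (p i)) (fderiv ℝ (fderiv ℝ F) (p (i + 1)))
        ≤ K * (D / n) := by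
    intro i hi
    rw [dist_eq_norm (fderiv ℝ (fderiv ℝ F) (p i))]
    calc ‖fderiv ℝ (fderiv ℝ F) (p i) - fderiv ℝ (fderiv ℝ F) (p (i + 1))‖
        ≤ ρ2 (F (p i)) * ‖p i - p (i + 1)‖ :=
          hρ2lip _ _ (by rw [hpstep i]; exact hDn)
      _ = ρ2 (F (p i)) * (D / n) := by rw [hpstep i]
      _ ≤ K * (D / n) := by
          apply mul_le_mul_of_nonneg_right _ (by positivity)
          exact hρ2mono (hFnn _) (by simp; linarith) (hFp i hi.le)
  calc ‖fderiv ℝ (fderiv ℝ F) u1 - fderiv ℝ (fderiv ℝ F) u2‖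
      = dist (fderiv ℝ (fderiv ℝ F) (p 0)) (fderiv ℝ (fderiv ℝ F) (p n)) := by
        rw [hp0, hpn, dist_eq_norm (fderiv ℝ (fderiv ℝ F) u1)]
    _ ≤ ∑ i ∈ Finset.range n, dist (fderiv ℝ (fderiv ℝ F) (p i))
          (fderiv ℝ (fderiv ℝ F) (p (i + 1))) :=
        dist_le_range_sum_dist (fun i => fderiv ℝ (fderiv ℝ F) (p i)) n
    _ ≤ ∑ _i ∈ Finset.range n, K * (D / n) := by
        apply Finset.sum_le_sum
        intro i hi
        exact hlip i (Finset.mem_range.1 hi)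
    _ = K * D := by
        rw [Finset.sum_const, Finset.card_range, nsmul_eq_mul]
        field_simp
    _ ≤ L2w0 * D := mul_le_mul_of_nonneg_right hKle hDnn
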